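/- With the Fock space operators as above, for every extended Young diagram Y and distinct integers i ≠ j, e_i^∞ f_j^∞ Y = f_j^∞ e_i^∞ Y. -/

import Mathlib

noncomputable section
open scoped Classical

abbrev K : Type := FractionRing (MvPolynomial (Fin 2) ℚ)

def rr : K := algebraMap (MvPolynomial (Fin 2) ℚ) K (MvPolynomial.X 0)
def ss : K := algebraMap (MvPolynomial (Fin 2) ℚ) K (MvPolynomial.X 1)

/-- An extended Young diagram of charge `n`: a weakly increasing integer sequence
eventually equal to `n`. -/
structure EYD (n : ℤ) where
  y : ℕ → ℤ
  mono : ∀ k, y k ≤ y (k + 1)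
  charge : ∃ N, ∀ k, N ≤ k → y k = n

namespace EYD

variable {n : ℤ}

/-- `Y` has a convex corner on diagonal `i` at column `k`. -/
def ConvexAt (Y : EYD n) (i : ℤ) (k : ℕ) : Prop :=
  Y.y k < Y.y (k + 1) ∧ Y.y k + k + 1 = i

/-- `Y` has a concave corner on diagonal `i` at column `k`. -/
def ConcaveAt (Y : EYD n) (i : ℤ) (k : ℕ) : Prop :=
  (k = 0 ∨ ∃ j, k = j + 1 ∧ Y.y j < Y.y k) ∧ Y.y k + k = i

/-- Replace the convex corner at column `k` by a concave one. -/
def up (Y : EYD n) (k : ℕ) (h : Y.y k < Y.y (k + 1)) : EYD n where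
  y := Function.update Y.y k (Y.y k + 1)
  mono := by
    intro m
    rcases eq_or_ne m k with rfl | h1
    · rw [Function.update_self, Function.update_of_ne (show m + 1 ≠ m by omega)]
      omega
    · rcases eq_or_ne (m + 1) k with h2 | h2
      · have hm := Y.mono m
        rw [Function.update_of_ne h1, h2, Function.update_self, ← h2]
        omega
      · rw [Function.update_of_ne h1, Function.update_of_ne h2]
        exact Y.mono m
  charge := by
    obtain ⟨N, hN⟩ := Y.charge
    exact ⟨max N (k + 1), fun m hm => by
      rw [Function.update_of_ne (show m ≠ k by omega)]
      exact hN m (by omega)⟩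

/-- Replace the concave corner at column `k` by a convex one. -/
def down (Y : EYD n) (k : ℕ) (h : k = 0 ∨ ∃ j, k = j + 1 ∧ Y.y j < Y.y k) : EYD n where
  y := Function.update Y.y k (Y.y k - 1)
  mono := by
    intro m
    rcases eq_or_ne m k with rfl | h1
    · rw [Function.update_self, Function.update_of_ne (show m + 1 ≠ m by omega)]
      have := Y.mono m
      omega
    · rcases eq_or_ne (m + 1) k with h2 | h2
      · rw [Function.update_of_ne h1, h2, Function.update_self]
        rcases h with h | ⟨j, hj, hjy⟩
        · omega
        · have : j = m := by omega
          subst this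
          omega
      · rw [Function.update_of_ne h1, Function.update_of_ne h2]
        exact Y.mono m
  charge := by
    obtain ⟨N, hN⟩ := Y.charge
    exact ⟨max N (k + 1), fun m hm => by
      rw [Function.update_of_ne (show m ≠ k by omega)]
      exact hN m (by omega)⟩

/-- The action of `e_i^∞` on a diagram: turn the convex corner on diagonal `i`
into a concave one, if any. -/
def eAct (i : ℤ) (Y : EYD n) : Option (EYD n) :=
  if h : ∃ k, Y.ConvexAt i k then some (Y.up h.choose h.choose_spec.1) else none

/-- The action of `f_i^∞` on a diagram: turn the concave corner on diagonal `i`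
into a convex one, if any. -/
def fAct (i : ℤ) (Y : EYD n) : Option (EYD n) :=
  if h : ∃ k, Y.ConcaveAt i k then some (Y.down h.choose h.choose_spec.1) else none

end EYD

/-- The Fock space of charge `n`. -/
abbrev Fock (n : ℤ) : Type := EYD n →₀ K

def ovec {n : ℤ} (o : Option (EYD n)) : Fock n :=
  o.elim 0 fun Y => Finsupp.single Y 1

/-- The linear operator on Fock space induced by a partially defined map on diagrams. -/
def opOf {n : ℤ} (a : EYD n → Option (EYD n)) : Fock n →ₗ[K] Fock n :=
  Finsupp.lsum K fun Y => LinearMap.smulRight (LinearMap.id : K →ₗ[K] K) (ovec (a Y))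

/-- A diagonal operator on Fock space. -/
def diagOp {n : ℤ} (c : EYD n → K) : Fock n →ₗ[K] Fock n :=
  Finsupp.lsum K fun Y => LinearMap.smulRight (LinearMap.id : K →ₗ[K] K) (c Y • Finsupp.single Y 1)

def Eop (n i : ℤ) : Fock n →ₗ[K] Fock n := opOf (EYD.eAct i)
def Fop (n i : ℤ) : Fock n →ₗ[K] Fock n := opOf (EYD.fAct i)

namespace EYD

variable {n : ℤ}

lemma ext' {Y Z : EYD n} (h : Y.y = Z.y) : Y = Z := by
  cases Y; cases Z; simpa using h

lemma add_strictMono (Y : EYD n) : StrictMono (fun c : ℕ => Y.y c + c) := by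
  apply strictMono_nat_of_lt_succ
  intro c
  have := Y.mono c
  push_cast
  omega

lemma diag_inj (Y : EYD n) {a b : ℕ} (h : Y.y a + a = Y.y b + b) : a = b := by
  exact Y.add_strictMono.injective (show Y.y a + (a:ℤ) = Y.y b + (b:ℤ) from h)

lemma convex_unique {Y : EYD n} {i : ℤ} {a b : ℕ}
    (ha : Y.ConvexAt i a) (hb : Y.ConvexAt i b) : a = b :=
  Y.diag_inj (by have := ha.2; have := hb.2; omega)

lemma concave_unique {Y : EYD n} {i : ℤ} {a b : ℕ}
    (ha : Y.ConcaveAt i a) (hb : Y.ConcaveAt i b) : a = b :=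
  Y.diag_inj (by have := ha.2; have := hb.2; omega)

lemma eAct_eq {Y : EYD n} {i : ℤ} {k : ℕ} (h : Y.ConvexAt i k) :
    eAct i Y = some (Y.up k h.1) := by
  have hex : ∃ c, Y.ConvexAt i c := ⟨k, h⟩
  rw [eAct, dif_pos hex]
  have hk : hex.choose = k := convex_unique hex.choose_spec h
  congr 1
  apply ext'
  simp [up, hk]

lemma fAct_eq {Y : EYD n} {j : ℤ} {k : ℕ} (h : Y.ConcaveAt j k) :
    fAct j Y = some (Y.down k h.1) := by
  have hex : ∃ c, Y.ConcaveAt j c := ⟨k, h⟩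
  rw [fAct, dif_pos hex]
  have hk : hex.choose = k := concave_unique hex.choose_spec h
  congr 1
  apply ext'
  simp [down, hk]

lemma eAct_none {Y : EYD n} {i : ℤ} (h : ¬∃ c, Y.ConvexAt i c) :
    eAct i Y = none := dif_neg h

lemma fAct_none {Y : EYD n} {j : ℤ} (h : ¬∃ c, Y.ConcaveAt j c) :
    fAct j Y = none := dif_neg h

end EYD

lemma opOf_single {n : ℤ} (a : EYD n → Option (EYD n)) (Y : EYD n) :
    opOf a (Finsupp.single Y 1) = ovec (a Y) := by
  simp [opOf]

lemma opOf_ovec {n : ℤ} (a : EYD n → Option (EYD n)) (o : Option (EYD n)) :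
    opOf a (ovec o) = ovec (o.bind a) := by
  cases o with
  | none => simp [ovec]
  | some Z => simpa [ovec] using opOf_single a Z

lemma core_comm {n : ℤ} (i j : ℤ) (hij : i ≠ j) (Y : EYD n) :
    (EYD.fAct j Y).bind (EYD.eAct i) = (EYD.eAct i Y).bind (EYD.fAct j) := by
  by_cases hF : ∃ k, Y.ConcaveAt j k
  · obtain ⟨k, hk⟩ := hF
    have hkd : Y.y k + k = j := hk.2
    by_cases hE : ∃ m, Y.ConvexAt i m
    · obtain ⟨m, hm⟩ := hE
      have hmd : Y.y m + m + 1 = i := hm.2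
      have hmlt : Y.y m < Y.y (m + 1) := hm.1
      rw [EYD.fAct_eq hk, EYD.eAct_eq hm, Option.bind_some, Option.bind_some]
      by_cases h1 : k = m
      · -- corners at the same column: i = j + 1, both sides die
        subst h1
        have hA : EYD.eAct i (Y.down k hk.1) = none := by
          apply EYD.eAct_none
          rintro ⟨c, hc⟩
          have hc2 := hc.2
          simp only [EYD.down, Function.update_apply] at hc2
          split_ifs at hc2 with h
          · omega
          · exact h (Y.diag_inj (by omega))
        have hB : EYD.fAct j (Y.up k hm.1) = none := by
          apply EYD.fAct_none
          rintro ⟨c, hc⟩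
          have hc2 := hc.2
          simp only [EYD.up, Function.update_apply] at hc2
          split_ifs at hc2 with h
          · omega
          · have hck : c = k := Y.diag_inj (by omega)
            omega
        rw [hA, hB]
      · by_cases h2 : k = m + 1
        · -- concave corner immediately above-right of convex corner
          have hlt : Y.y m < Y.y k := by rw [h2]; exact hmlt
          by_cases h3 : Y.y m = Y.y k - 1
          · -- adjacent diagonals (i = j - 1): both sides die
            have hA : EYD.eAct i (Y.down k hk.1) = none := by
              apply EYD.eAct_none
              rintro ⟨c, hc⟩
              have hc1 := hc.1
              have hc2 := hc.2
              simp only [EYD.down, Function.update_apply] at hc1 hc2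
              split_ifs at hc1 hc2 with ha hb hb
              · omega
              · omega
              · omega
              · have hcm : c = m := Y.diag_inj (by omega)
                omega
            have hB : EYD.fAct j (Y.up m hm.1) = none := by
              apply EYD.fAct_none
              rintro ⟨c, hc⟩
              have hc1 := hc.1
              have hc2 := hc.2
              simp only [EYD.up, Function.update_apply] at hc2
              split_ifs at hc2 with h
              · omega
              · have hck : c = k := Y.diag_inj (by omega)
                subst hck
                rcases hc1 with h0 | ⟨p, hp, hplt⟩
                · omega
                · have hpm : p = m := by omega
                  subst hpm
                  simp only [EYD.up, Function.update_apply] at hplt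
                  split_ifs at hplt <;> omega
            rw [hA, hB]
          · -- non-adjacent: corners commute
            have hconv : (Y.down k hk.1).ConvexAt i m := by
              constructor
              · simp only [EYD.down, Function.update_apply]
                split_ifs <;> omega
              · simp only [EYD.down, Function.update_apply]
                split_ifs <;> omega
            have hconc : (Y.up m hm.1).ConcaveAt j k := by
              constructor
              · right
                refine ⟨m, h2, ?_⟩
                simp only [EYD.up, Function.update_apply]
                split_ifs <;> omega
              · simp only [EYD.up, Function.update_apply]
                split_ifs <;> omega
            rw [EYD.eAct_eq hconv, EYD.fAct_eq hconc]
            congr 1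
            apply EYD.ext'
            funext c
            simp only [EYD.up, EYD.down, Function.update_apply]
            split_ifs <;> omega
        · -- far-apart corners: commute
          have hconv : (Y.down k hk.1).ConvexAt i m := by
            constructor
            · simp only [EYD.down, Function.update_apply]
              split_ifs <;> omega
            · simp only [EYD.down, Function.update_apply]
              split_ifs <;> omega
          have hconc : (Y.up m hm.1).ConcaveAt j k := by
            constructor
            · rcases hk.1 with h0 | ⟨p, hp, hplt⟩
              · exact Or.inl h0
              · right
                refine ⟨p, hp, ?_⟩
                simp only [EYD.up, Function.update_apply]
                split_ifs <;> omega
            · simp only [EYD.up, Function.update_apply]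
              split_ifs <;> omega
          rw [EYD.eAct_eq hconv, EYD.fAct_eq hconc]
          congr 1
          apply EYD.ext'
          funext c
          simp only [EYD.up, EYD.down, Function.update_apply]
          split_ifs <;> omega
    · -- no convex corner on diagonal i at all
      rw [EYD.fAct_eq hk, EYD.eAct_none hE, Option.bind_some, Option.bind_none]
      apply EYD.eAct_none
      rintro ⟨c, hc⟩
      have hc1 := hc.1
      have hc2 := hc.2
      simp only [EYD.down, Function.update_apply] at hc1 hc2
      split_ifs at hc1 hc2 with ha hb hb
      · omega
      · omega
      · -- c + 1 = k : Y would have a convex corner at c on diagonal i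
        exact hE ⟨c, by rw [show c + 1 = k from hb]; omega, hc2⟩
      · exact hE ⟨c, hc1, hc2⟩
  · by_cases hE : ∃ m, Y.ConvexAt i m
    · obtain ⟨m, hm⟩ := hE
      have hmd : Y.y m + m + 1 = i := hm.2
      rw [EYD.eAct_eq hm, EYD.fAct_none hF, Option.bind_some, Option.bind_none]
      symm
      apply EYD.fAct_none
      rintro ⟨c, hc⟩
      have hc1 := hc.1
      have hc2 := hc.2
      simp only [EYD.up, Function.update_apply] at hc2
      split_ifs at hc2 with ha
      · omega
      · rcases hc1 with h0 | ⟨p, hp, hplt⟩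
        · exact hF ⟨c, Or.inl h0, hc2⟩
        · simp only [EYD.up, Function.update_apply] at hplt
          rw [if_neg ha] at hplt
          split_ifs at hplt with hb
          · exact hF ⟨c, Or.inr ⟨p, hp, by rw [hb]; omega⟩, hc2⟩
          · exact hF ⟨c, Or.inr ⟨p, hp, hplt⟩, hc2⟩
    · rw [EYD.fAct_none hF, EYD.eAct_none hE]
      rfl

/-- For distinct `i ≠ j`, the Fock space operators `e_i^∞` and `f_j^∞` commute on
every basis vector. -/
theorem stmt_12 (n i j : ℤ) (hij : i ≠ j) (Y : EYD n) :
    Eop n i (Fop n j (Finsupp.single Y 1)) = Fop n j (Eop n i (Finsupp.single Y 1)) := by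
  rw [Eop, Fop, opOf_single, opOf_single, opOf_ovec, opOf_ovec, core_comm i j hij Y]
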